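/- Let E be a Dedekind σ-complete vector lattice and let (u_n) and (U_n) be sequences in E with |u_n| ≤ U_n for all n. If the partial sums S_m = ∑_{n<m} U_n have a least upper bound S ∈ E, then there exists s ∈ E such that the partial sums s_m = ∑_{n<m} u_n order-converge to s, and |s| ≤ S. -/

import Mathlib

/-- A sequence `x` in a lattice-ordered group order-converges to `l` if there is an
antitone sequence `ε` with infimum `0` dominating `|x p - l|`. -/
def OrderConv {E : Type*} [Lattice E] [AddCommGroup E] (x : ℕ → E) (l : E) : Prop :=
  ∃ ε : ℕ → E, Antitone ε ∧ IsGLB (Set.range ε) 0 ∧ ∀ p, |x p - l| ≤ ε p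

section Aux

variable {E : Type*} [Lattice E] [AddCommGroup E]
    [CovariantClass E E (· + ·) (· ≤ ·)]

lemma sum_le_sum_aux (f g : ℕ → E) (h : ∀ n, f n ≤ g n) (m : ℕ) :
    ∑ n ∈ Finset.range m, f n ≤ ∑ n ∈ Finset.range m, g n := by
  induction m with
  | zero => simp
  | succ m ih =>
      rw [Finset.sum_range_succ, Finset.sum_range_succ]
      exact add_le_add ih (h m)

end Aux

/-- In a Dedekind σ-complete vector lattice, if `|u n| ≤ U n` for all `n` and the
partial sums of `U` have a least upper bound `S`, then the partial sums of `u`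
order-converge to some `s` with `|s| ≤ S`. -/
theorem stmt_1 {E : Type*} [Lattice E] [AddCommGroup E] [Module ℝ E]
    [CovariantClass E E (· + ·) (· ≤ ·)]
    (hsmul : ∀ (c : ℝ) (v : E), 0 ≤ c → 0 ≤ v → 0 ≤ c • v)
    (hDed : ∀ f : ℕ → E, Monotone f → BddAbove (Set.range f) →
      ∃ l, IsLUB (Set.range f) l)
    (u U : ℕ → E) (hU : ∀ n, |u n| ≤ U n) (S : E)
    (hS : IsLUB (Set.range (fun m => ∑ n ∈ Finset.range m, U n)) S) :
    ∃ s : E, OrderConv (fun m => ∑ n ∈ Finset.range m, u n) s ∧ |s| ≤ S := by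
  set T : ℕ → E := fun m => ∑ n ∈ Finset.range m, U n with hTdef
  have hU0 : ∀ n, (0 : E) ≤ U n := fun n => (abs_nonneg _).trans (hU n)
  have hTmono : Monotone T := monotone_nat_of_le_succ fun m => by
    rw [hTdef]; simp only [Finset.sum_range_succ]
    exact le_add_of_nonneg_right (hU0 m)
  have hTleS : ∀ m, T m ≤ S := fun m => hS.1 ⟨m, rfl⟩
  -- positive and negative parts
  set P : ℕ → E := fun m => ∑ n ∈ Finset.range m, (u n)⁺ with hPdef
  set Q : ℕ → E := fun m => ∑ n ∈ Finset.range m, (u n)⁻ with hQdef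
  have hPpart : ∀ n, (u n)⁺ ≤ U n := fun n =>
    le_trans (le_add_of_nonneg_right (negPart_nonneg _))
      (by rw [posPart_add_negPart]; exact hU n)
  have hQpart : ∀ n, (u n)⁻ ≤ U n := fun n =>
    le_trans (le_add_of_nonneg_left (posPart_nonneg _))
      (by rw [posPart_add_negPart]; exact hU n)
  have hPmono : Monotone P := monotone_nat_of_le_succ fun m => by
    rw [hPdef]; simp only [Finset.sum_range_succ]
    exact le_add_of_nonneg_right (posPart_nonneg _)
  have hQmono : Monotone Q := monotone_nat_of_le_succ fun m => by
    rw [hQdef]; simp only [Finset.sum_range_succ]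
    exact le_add_of_nonneg_right (negPart_nonneg _)
  have hPleT : ∀ m, P m ≤ T m := fun m => sum_le_sum_aux _ _ hPpart m
  have hQleT : ∀ m, Q m ≤ T m := fun m => sum_le_sum_aux _ _ hQpart m
  obtain ⟨p, hp⟩ := hDed P hPmono ⟨S, by rintro _ ⟨m, rfl⟩; exact (hPleT m).trans (hTleS m)⟩
  obtain ⟨q, hq⟩ := hDed Q hQmono ⟨S, by rintro _ ⟨m, rfl⟩; exact (hQleT m).trans (hTleS m)⟩
  -- key tail estimate: p - P m ≤ S - T m (and same for q)
  have key : ∀ (f : ℕ → E) (F : ℕ → E) (l : E), (∀ n, f n ≤ U n) →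
      (F = fun m => ∑ n ∈ Finset.range m, f n) → Monotone F → IsLUB (Set.range F) l →
      ∀ m, l - F m ≤ S - T m := by
    intro f F l hf hF hFmono hl m
    rw [sub_le_sub_iff]
    have : ∀ k, F k ≤ F m + (S - T m) := by
      intro k
      rcases le_total k m with hk | hk
      · exact le_add_of_le_of_nonneg (hFmono hk) (sub_nonneg.2 (hTleS m))
      · have h1 : F k - F m ≤ T k - T m := by
          have e1 : F k - F m = ∑ n ∈ Finset.Ico m k, f n := by
            rw [hF]; simp only [sub_eq_iff_eq_add']
            simp only [Finset.range_eq_Ico]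
            exact (Finset.sum_Ico_consecutive _ (Nat.zero_le m) hk).symm
          have e2 : T k - T m = ∑ n ∈ Finset.Ico m k, U n := by
            rw [hTdef]; simp only [sub_eq_iff_eq_add']
            simp only [Finset.range_eq_Ico]
            exact (Finset.sum_Ico_consecutive _ (Nat.zero_le m) hk).symm
          rw [e1, e2]
          -- sum over Ico
          have : ∀ (a b : ℕ), ∑ n ∈ Finset.Ico a b, f n ≤ ∑ n ∈ Finset.Ico a b, U n := by
            intro a b
            induction b with
            | zero => simp
            | succ b ih =>
                rcases le_or_gt a (b) with hab | hab
                · rw [Finset.sum_Ico_succ_top hab, Finset.sum_Ico_succ_top hab]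
                  exact add_le_add ih (hf b)
                · rw [Finset.Ico_eq_empty (by omega)]; simp
          exact this m k
        have h2 : T k - T m ≤ S - T m := sub_le_sub_right (hTleS k) _
        calc F k = F m + (F k - F m) := by abel
          _ ≤ F m + (S - T m) := add_le_add_right (h1.trans h2) _
    have hub : l ≤ F m + (S - T m) := hl.2 (fun x ⟨k, hk⟩ => hk ▸ this k)
    calc l + T m ≤ (F m + (S - T m)) + T m := add_le_add_left hub _
      _ = S + F m := by abel
  have keyP : ∀ m, p - P m ≤ S - T m := key _ P p hPpart rfl hPmono hp
  have keyQ : ∀ m, q - Q m ≤ S - T m := key _ Q q hQpart rfl hQmono hq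
  -- the ε sequence
  set ε : ℕ → E := fun m => (S - T m) + (S - T m) with hεdef
  have hε0 : ∀ m, (0 : E) ≤ S - T m := fun m => sub_nonneg.2 (hTleS m)
  have hεanti : Antitone ε := fun a b hab =>
    add_le_add (sub_le_sub_left (hTmono hab) _) (sub_le_sub_left (hTmono hab) _)
  -- glb of ε is 0
  have hεglb : IsGLB (Set.range ε) 0 := by
    constructor
    · rintro _ ⟨m, rfl⟩
      exact add_nonneg (hε0 m) (hε0 m)
    · intro b hb
      have hb' : ∀ m, b ≤ ε m := fun m => hb ⟨m, rfl⟩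
      have step : ∀ c : E, (∀ m, c ≤ S - T m) → c ≤ 0 := by
        intro c hc
        have : ∀ m, T m ≤ S - c := fun m => by
          have := hc m
          calc T m = (c + T m) - c := by abel
            _ ≤ ((S - T m) + T m) - c := sub_le_sub_right (add_le_add_left (hc m) _) _
            _ = S - c := by abel
        have hSle : S ≤ S - c := hS.2 (fun x ⟨m, hm⟩ => hm ▸ this m)
        have := sub_le_sub_left hSle S
        simpa using this
      have h1 : ∀ m2, b - (S - T m2) ≤ 0 := by
        intro m2
        apply step
        intro m1
        have hr := hb' (max m1 m2)
        have : ε (max m1 m2) ≤ (S - T m1) + (S - T m2) :=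
          add_le_add (sub_le_sub_left (hTmono (le_max_left _ _)) _)
            (sub_le_sub_left (hTmono (le_max_right _ _)) _)
        have hbb : b ≤ (S - T m1) + (S - T m2) := hr.trans this
        calc b - (S - T m2) ≤ ((S - T m1) + (S - T m2)) - (S - T m2) :=
              sub_le_sub_right hbb _
          _ = S - T m1 := by abel
      apply step
      intro m
      have := h1 m
      calc b = (b - (S - T m)) + (S - T m) := by abel
        _ ≤ 0 + (S - T m) := add_le_add_left (h1 m) _
        _ = S - T m := by rw [zero_add]
  -- the limit
  refine ⟨p - q, ⟨ε, hεanti, hεglb, ?_⟩, ?_⟩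
  · intro m
    have hsum : (fun m => ∑ n ∈ Finset.range m, u n) m = P m - Q m := by
      simp only [hPdef, hQdef, ← Finset.sum_sub_distrib]
      exact Finset.sum_congr rfl fun n _ => (posPart_sub_negPart (u n)).symm
    have e : (∑ n ∈ Finset.range m, u n) - (p - q) = (P m - p) + (q - Q m) := by
      rw [show (∑ n ∈ Finset.range m, u n) = P m - Q m from hsum]; abel
    rw [e]
    calc |(P m - p) + (q - Q m)| ≤ |P m - p| + |q - Q m| := abs_add_le _ _
      _ = (p - P m) + (q - Q m) := by
          rw [abs_sub_comm, abs_of_nonneg (sub_nonneg.2 (hp.1 ⟨m, rfl⟩)),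
            abs_of_nonneg (sub_nonneg.2 (hq.1 ⟨m, rfl⟩))]
      _ ≤ (S - T m) + (S - T m) := add_le_add (keyP m) (keyQ m)
  · -- |p - q| ≤ S
    have hbound : ∀ m, |p - q| - S ≤ ε m := by
      intro m
      have h1 : |p - q| ≤ |(p - P m) - (q - Q m)| + |P m - Q m| := by
        have : p - q = ((p - P m) - (q - Q m)) + (P m - Q m) := by abel
        rw [this]; exact abs_add_le _ _
      have h2 : |(p - P m) - (q - Q m)| ≤ (S - T m) + (S - T m) := by
        calc |(p - P m) - (q - Q m)| ≤ |p - P m| + |q - Q m| := by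
              rw [sub_eq_add_neg]
              exact (abs_add_le _ _).trans_eq (by rw [abs_neg])
          _ = (p - P m) + (q - Q m) := by
              rw [abs_of_nonneg (sub_nonneg.2 (hp.1 ⟨m, rfl⟩)),
                abs_of_nonneg (sub_nonneg.2 (hq.1 ⟨m, rfl⟩))]
          _ ≤ (S - T m) + (S - T m) := add_le_add (keyP m) (keyQ m)
      have h3 : |P m - Q m| ≤ S := by
        have hPnn : (0:E) ≤ P m := by
          rw [hPdef]
          calc (0:E) = ∑ _n ∈ Finset.range m, (0:E) := by simp
            _ ≤ _ := sum_le_sum_aux _ _ (fun n => posPart_nonneg (u n)) m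
        have hQnn : (0:E) ≤ Q m := by
          rw [hQdef]
          calc (0:E) = ∑ _n ∈ Finset.range m, (0:E) := by simp
            _ ≤ _ := sum_le_sum_aux _ _ (fun n => negPart_nonneg (u n)) m
        calc |P m - Q m| ≤ |P m| + |Q m| := by
              rw [sub_eq_add_neg]
              exact (abs_add_le _ _).trans_eq (by rw [abs_neg])
          _ = P m + Q m := by rw [abs_of_nonneg hPnn, abs_of_nonneg hQnn]
          _ = ∑ n ∈ Finset.range m, ((u n)⁺ + (u n)⁻) := by
              rw [hPdef, hQdef, ← Finset.sum_add_distrib]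
          _ = ∑ n ∈ Finset.range m, |u n| := by
              exact Finset.sum_congr rfl fun n _ => posPart_add_negPart (u n)
          _ ≤ T m := sum_le_sum_aux _ _ hU m
          _ ≤ S := hTleS m
      calc |p - q| - S ≤ (((S - T m) + (S - T m)) + S) - S := by
            refine sub_le_sub_right (h1.trans ?_) _
            exact add_le_add h2 h3
        _ = ε m := by rw [hεdef]; abel
    have := hεglb.2 (fun x ⟨m, hm⟩ => hm ▸ hbound m)
    have : |p - q| - S ≤ 0 := this
    calc |p - q| = (|p - q| - S) + S := by abel
      _ ≤ 0 + S := add_le_add_left this _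
      _ = S := zero_add S
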